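/- Let p ∈ (0, 8] and define u : ℝ → ℝ by u(x) = −(3/4)p x⁴ + p x³ + 1. Then x = 1 is a global maximizer of u over ℝ with u(1) = 1 + p/4, and u is (1, p/4)-smooth with respect to x* = 1: for all x ∈ ℝ, u'(x) · (1 − x) ≥ u(1) − (1 + p/4) · u(x), equivalently 3p x²(1 − x)² ≥ (1 + p/4) − (1 + p/4)u(x). -/

import Mathlib

lemma key_ineq (p x : ℝ) (hp0 : 0 < p) (hp8 : p ≤ 8) :
    3 * p * x^2 * (1 - x)^2 ≥ (1 + p/4) - (1 + p/4) * (-(3/4) * p * x^4 + p * x^3 + 1) := by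
  nlinarith [sq_nonneg (x - 2), sq_nonneg x, sq_nonneg (x*(x-2)), mul_pos hp0 hp0,
    mul_nonneg (mul_nonneg hp0.le hp0.le) (sq_nonneg (x*(x-2))),
    mul_nonneg hp0.le (sq_nonneg (x*(x-2))),
    mul_nonneg hp0.le (sq_nonneg x),
    mul_nonneg (mul_nonneg hp0.le (sub_nonneg.2 hp8)) (sq_nonneg x),
    sq_nonneg (3*x - 2)]

/-- **A smooth but not quasar-concave polynomial** (Claim `u`):
for `p ∈ (0, 8]` and `u(x) = −(3/4)p x⁴ + p x³ + 1`, the point `x = 1` is a global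
maximizer with `u(1) = 1 + p/4`, and `u` is `(1, p/4)`-smooth with respect to `x* = 1`:
`u'(x)(1 − x) ≥ u(1) − (1 + p/4)·u(x)` for all `x`, equivalently
`3p x²(1 − x)² ≥ (1 + p/4) − (1 + p/4)·u(x)`. -/
theorem polynomial_smooth (p : ℝ) (hp0 : 0 < p) (hp8 : p ≤ 8)
    (u : ℝ → ℝ) (hu : ∀ x, u x = -(3/4) * p * x^4 + p * x^3 + 1) :
    (∀ x : ℝ, u x ≤ u 1) ∧ u 1 = 1 + p/4 ∧
    (∀ x : ℝ, deriv u x * (1 - x) ≥ u 1 - (1 + p/4) * u x) ∧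
    (∀ x : ℝ, 3 * p * x^2 * (1 - x)^2 ≥ (1 + p/4) - (1 + p/4) * u x) := by
  have hu' : u = fun x => -(3/4) * p * x^4 + p * x^3 + 1 := funext hu
  have hderiv : ∀ x : ℝ, deriv u x = -3 * p * x^3 + 3 * p * x^2 := by
    intro x
    rw [hu']
    have : HasDerivAt (fun x : ℝ => -(3/4) * p * x^4 + p * x^3 + 1)
        (-3 * p * x^3 + 3 * p * x^2) x := by
      have h1 : HasDerivAt (fun x : ℝ => x^4) (4 * x^3) x := by
        simpa using hasDerivAt_pow 4 x
      have h2 : HasDerivAt (fun x : ℝ => x^3) (3 * x^2) x := by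
        simpa using hasDerivAt_pow 3 x
      have := ((h1.const_mul (-(3/4) * p)).add (h2.const_mul p)).add_const 1
      exact this.congr_deriv (by ring)
    exact this.deriv
  refine ⟨?_, ?_, ?_, ?_⟩
  · intro x
    rw [hu x, hu 1]
    nlinarith [sq_nonneg (x - 1), sq_nonneg x, mul_nonneg hp0.le (sq_nonneg (x*(x-1))),
      mul_nonneg hp0.le (sq_nonneg (x-1))]
  · rw [hu 1]; ring
  · intro x
    rw [hderiv x, hu x, hu 1]
    have := key_ineq p x hp0 hp8
    nlinarith [this]
  · intro x
    rw [hu x]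
    exact key_ineq p x hp0 hp8
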